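/- Every facet of the 24-cell is a regular octahedron: for every w ∈ G ∪ R ∪ B, there exists an isometric affine embedding ι : EuclideanSpace ℝ (Fin 3) → EuclideanSpace ℝ (Fin 4) such that { x ∈ convexHull ℝ V : ⟪x, w⟫ = 1 } = ι '' (convexHull ℝ {e₁, -e₁, e₂, -e₂, e₃, -e₃}), where e₁, e₂, e₃ are the standard basis vectors of EuclideanSpace ℝ (Fin 3). -/

import Mathlib

open scoped RealInnerProductSpace Pointwise

/-- The `i`-th standard basis vector of `EuclideanSpace ℝ (Fin 4)`. -/
noncomputable def stdV (i : Fin 4) : EuclideanSpace ℝ (Fin 4) :=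
  EuclideanSpace.single i (1 : ℝ)

/-- The 24 vertices of the 24-cell: all permutations of the coordinates of `(±1, ±1, 0, 0)`. -/
def cellV : Set (EuclideanSpace ℝ (Fin 4)) :=
  {x | ∃ i j : Fin 4, i ≠ j ∧ ∃ ε δ : ℝ, (ε = 1 ∨ ε = -1) ∧ (δ = 1 ∨ δ = -1) ∧
    x = ε • stdV i + δ • stdV j}

/-- The 8 green vectors `±eᵢ`. -/
def colG : Set (EuclideanSpace ℝ (Fin 4)) :=
  {x | ∃ i : Fin 4, x = stdV i ∨ x = -stdV i}

/-- The 8 red vectors `(±1/2, ±1/2, ±1/2, ±1/2)` with an even number of minus signs. -/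
def colR : Set (EuclideanSpace ℝ (Fin 4)) :=
  {x | ∃ ε : Fin 4 → ℝ, (∀ i, ε i = 1 ∨ ε i = -1) ∧ (∏ i, ε i) = 1 ∧ ∀ i, x i = ε i / 2}

/-- The 8 blue vectors `(±1/2, ±1/2, ±1/2, ±1/2)` with an odd number of minus signs. -/
def colB : Set (EuclideanSpace ℝ (Fin 4)) :=
  {x | ∃ ε : Fin 4 → ℝ, (∀ i, ε i = 1 ∨ ε i = -1) ∧ (∏ i, ε i) = -1 ∧ ∀ i, x i = ε i / 2}

/-- The polar of a subset of `EuclideanSpace ℝ (Fin 4)`. -/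
def polarSet (S : Set (EuclideanSpace ℝ (Fin 4))) : Set (EuclideanSpace ℝ (Fin 4)) :=
  {y | ∀ x ∈ S, ⟪x, y⟫ ≤ 1}

/-- The `i`-th standard basis vector of `EuclideanSpace ℝ (Fin 3)`. -/
noncomputable def stdW (i : Fin 3) : EuclideanSpace ℝ (Fin 3) :=
  EuclideanSpace.single i (1 : ℝ)

/-! ### Auxiliary lemmas -/

lemma face_hull {V : Set (EuclideanSpace ℝ (Fin 4))} {w : EuclideanSpace ℝ (Fin 4)}
    (hV : ∀ v ∈ V, ⟪v, w⟫ ≤ 1) :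
    {x ∈ convexHull ℝ V | ⟪x, w⟫ = 1} = convexHull ℝ {v ∈ V | ⟪v, w⟫ = 1} := by
  ext x
  constructor
  · rintro ⟨hx, hx1⟩
    rw [convexHull_eq] at hx
    obtain ⟨ι, t, f, z, hf0, hf1, hz, rfl⟩ := hx
    have hcm : t.centerMass f z = ∑ i ∈ t, f i • z i := Finset.centerMass_eq_of_sum_1 t z hf1
    have hinner : ∑ i ∈ t, f i * ⟪z i, w⟫ = 1 := by
      rw [← hx1, hcm, sum_inner]
      exact Finset.sum_congr rfl fun i _ => (real_inner_smul_left (z i) w (f i)).symm ▸ rfl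
    have hzero : ∀ i ∈ t, f i * (1 - ⟪z i, w⟫) = 0 := by
      rw [← Finset.sum_eq_zero_iff_of_nonneg]
      · have : ∑ i ∈ t, f i * (1 - ⟪z i, w⟫) = (∑ i ∈ t, f i) - ∑ i ∈ t, f i * ⟪z i, w⟫ := by
          rw [← Finset.sum_sub_distrib]; congr 1; ext i; ring
        rw [this, hf1, hinner]; ring
      · intro i hi
        have h1 := hV (z i) (hz i hi)
        have h0 := hf0 i hi
        nlinarith
    rw [← Finset.centerMass_filter_ne_zero (t := t) (w := f) z]
    apply Finset.centerMass_mem_convexHull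
    · intro i hi; exact hf0 i (Finset.mem_filter.mp hi).1
    · rw [Finset.sum_filter_ne_zero, hf1]; norm_num
    · intro i hi
      rw [Finset.mem_filter] at hi
      refine ⟨hz i hi.1, ?_⟩
      have := hzero i hi.1
      rcases mul_eq_zero.mp this with h | h
      · exact absurd h hi.2
      · linarith
  · intro hx
    have hsub : {v ∈ V | ⟪v, w⟫ = 1} ⊆ V := fun v hv => hv.1
    refine ⟨convexHull_mono hsub hx, ?_⟩
    have hconv : Convex ℝ {x : EuclideanSpace ℝ (Fin 4) | ⟪x, w⟫ = 1} := by
      intro a ha b hb s r hs hr hsr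
      simp only [Set.mem_setOf_eq] at *
      rw [inner_add_left, real_inner_smul_left, real_inner_smul_left, ha, hb]
      linarith
    exact convexHull_min (fun v hv => hv.2) hconv hx

noncomputable def embedMap (w : EuclideanSpace ℝ (Fin 4)) (u : Fin 3 → EuclideanSpace ℝ (Fin 4))
    (hu : Orthonormal ℝ u) : EuclideanSpace ℝ (Fin 3) →ᵃⁱ[ℝ] EuclideanSpace ℝ (Fin 4) :=
  ((AffineIsometryEquiv.constVAdd ℝ (EuclideanSpace ℝ (Fin 4)) w).toAffineIsometry).comp
    (LinearIsometry.toAffineIsometry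
      { toLinearMap :=
          { toFun := fun x => ∑ k, x k • u k
            map_add' := by intro x y; simp [add_smul, Finset.sum_add_distrib]
            map_smul' := by intro c x; simp [smul_smul, Finset.smul_sum] }
        norm_map' := by
          intro x
          have h1 : ⟪∑ k, x k • u k, ∑ k, x k • u k⟫ = ∑ k, x k * x k :=
            hu.inner_sum x x Finset.univ
          have h2 : ⟪x, x⟫ = ∑ k, x k * x k := by
            rw [PiLp.inner_apply]; simp [RCLike.inner_apply]
            exact Finset.sum_congr rfl fun i _ => sq _
          simp only [LinearMap.coe_mk, AddHom.coe_mk]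
          rw [norm_eq_sqrt_real_inner, norm_eq_sqrt_real_inner x, h1, h2] })

lemma embedMap_apply (w : EuclideanSpace ℝ (Fin 4)) (u : Fin 3 → EuclideanSpace ℝ (Fin 4))
    (hu : Orthonormal ℝ u) (x : EuclideanSpace ℝ (Fin 3)) :
    embedMap w u hu x = w + ∑ k, x k • u k := by
  simp [embedMap, AffineIsometryEquiv.constVAdd, LinearIsometry.toAffineIsometry]
  rfl

lemma embedMap_std (w : EuclideanSpace ℝ (Fin 4)) (u : Fin 3 → EuclideanSpace ℝ (Fin 4))
    (hu : Orthonormal ℝ u) (k : Fin 3) :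
    embedMap w u hu (stdW k) = w + u k ∧ embedMap w u hu (-stdW k) = w - u k := by
  have h1 : ∀ j : Fin 3, (stdW k) j • u j = (if j = k then u k else 0) := by
    intro j; simp [stdW, EuclideanSpace.single_apply]
    split <;> simp_all
  constructor
  · rw [embedMap_apply]
    congr 1
    rw [Finset.sum_congr rfl (fun j _ => h1 j), Finset.sum_ite_eq' Finset.univ k]
    simp
  · rw [embedMap_apply]
    have : ∀ j : Fin 3, (-stdW k) j • u j = (if j = k then -u k else 0) := by
      intro j
      have : (-stdW k) j = -(stdW k j) := rfl
      rw [this, neg_smul, h1 j]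
      split <;> simp
    rw [Finset.sum_congr rfl (fun j _ => this j), Finset.sum_ite_eq' Finset.univ k]
    simp [sub_eq_add_neg]

lemma key (w : EuclideanSpace ℝ (Fin 4)) (u : Fin 3 → EuclideanSpace ℝ (Fin 4))
    (hu : Orthonormal ℝ u)
    (hV : ∀ v ∈ cellV, ⟪v, w⟫ ≤ 1)
    (hface : {v ∈ cellV | ⟪v, w⟫ = 1} =
      {w + u 0, w - u 0, w + u 1, w - u 1, w + u 2, w - u 2}) :
    ∃ ι : EuclideanSpace ℝ (Fin 3) →ᵃⁱ[ℝ] EuclideanSpace ℝ (Fin 4),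
      {x ∈ convexHull ℝ cellV | ⟪x, w⟫ = 1} =
        ι '' (convexHull ℝ {stdW 0, -stdW 0, stdW 1, -stdW 1, stdW 2, -stdW 2}) := by
  refine ⟨embedMap w u hu, ?_⟩
  rw [face_hull hV, hface]
  have himg : (embedMap w u hu) '' (convexHull ℝ {stdW 0, -stdW 0, stdW 1, -stdW 1, stdW 2, -stdW 2})
      = convexHull ℝ ((embedMap w u hu) '' {stdW 0, -stdW 0, stdW 1, -stdW 1, stdW 2, -stdW 2}) :=
    (embedMap w u hu).toAffineMap.image_convexHull _
  rw [himg]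
  congr 1
  have e0 := embedMap_std w u hu 0
  have e1 := embedMap_std w u hu 1
  have e2 := embedMap_std w u hu 2
  simp only [Set.image_insert_eq, Set.image_singleton, e0.1, e0.2, e1.1, e1.2, e2.1, e2.2]

lemma inner_vert (i j : Fin 4) (ε δ : ℝ) (w : EuclideanSpace ℝ (Fin 4)) :
    ⟪ε • stdV i + δ • stdV j, w⟫ = ε * w i + δ * w j := by
  rw [inner_add_left, real_inner_smul_left, real_inner_smul_left, stdV, stdV,
    EuclideanSpace.inner_single_left, EuclideanSpace.inner_single_left]
  norm_num

lemma stdV_apply (m l : Fin 4) : stdV m l = if l = m then 1 else 0 := by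
  rw [stdV, EuclideanSpace.single_apply]

lemma smul_stdV_apply (τ : ℝ) (m l : Fin 4) :
    (τ • stdV m) l = if l = m then τ else 0 := by
  have : (τ • stdV m) l = τ * (stdV m l) := rfl
  rw [this, stdV, EuclideanSpace.single_apply]
  split <;> simp

lemma orthonormal_stdV : Orthonormal ℝ stdV := by
  rw [orthonormal_iff_ite]
  intro i j
  rw [stdV, stdV, EuclideanSpace.inner_single_left, EuclideanSpace.single_apply]
  norm_num

/-! ### The green case -/

lemma green_hV (m : Fin 4) (τ : ℝ) (hτ : τ = 1 ∨ τ = -1) :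
    ∀ v ∈ cellV, ⟪v, τ • stdV m⟫ ≤ 1 := by
  rintro v ⟨i, j, hij, ε, δ, hε, hδ, rfl⟩
  rw [inner_vert, smul_stdV_apply, smul_stdV_apply]
  by_cases h1 : i = m <;> by_cases h2 : j = m <;>
    first
    | (exfalso; exact hij (h1.trans h2.symm))
    | (rcases hε with rfl|rfl <;> rcases hδ with rfl|rfl <;> rcases hτ with rfl|rfl <;>
        simp [h1, h2])

lemma green_face (m : Fin 4) (τ : ℝ) (hτ : τ = 1 ∨ τ = -1) :
    {v ∈ cellV | ⟪v, τ • stdV m⟫ = 1} =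
      ({τ • stdV m + stdV (m.succAbove 0), τ • stdV m - stdV (m.succAbove 0),
        τ • stdV m + stdV (m.succAbove 1), τ • stdV m - stdV (m.succAbove 1),
        τ • stdV m + stdV (m.succAbove 2), τ • stdV m - stdV (m.succAbove 2)} :
        Set (EuclideanSpace ℝ (Fin 4))) := by
  have hττ : τ * τ = 1 := by rcases hτ with rfl|rfl <;> norm_num
  ext v
  constructor
  · rintro ⟨⟨i, j, hij, ε, δ, hε, hδ, rfl⟩, h1⟩
    rw [inner_vert, smul_stdV_apply, smul_stdV_apply] at h1
    have mem6 : ∀ l : Fin 4, l ≠ m → ∀ x : EuclideanSpace ℝ (Fin 4),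
        (x = τ • stdV m + stdV l ∨ x = τ • stdV m - stdV l) →
        x ∈ ({τ • stdV m + stdV (m.succAbove 0), τ • stdV m - stdV (m.succAbove 0),
          τ • stdV m + stdV (m.succAbove 1), τ • stdV m - stdV (m.succAbove 1),
          τ • stdV m + stdV (m.succAbove 2), τ • stdV m - stdV (m.succAbove 2)} :
          Set (EuclideanSpace ℝ (Fin 4))) := by
      intro l hl x hx
      obtain ⟨k, rfl⟩ := Fin.exists_succAbove_eq hl
      fin_cases k <;>
        · simp only [Set.mem_insert_iff, Set.mem_singleton_iff]
          tauto
    by_cases h1m : i = m <;> by_cases h2m : j = m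
    · exact absurd (h1m.trans h2m.symm) hij
    · subst h1m
      simp only [if_pos rfl, if_neg h2m, mul_zero, add_zero] at h1
      have hε' : ε = τ := by rcases hε with rfl|rfl <;> rcases hτ with rfl|rfl <;> norm_num at h1 <;> norm_num
      subst hε'
      refine mem6 j h2m _ ?_
      rcases hδ with rfl|rfl
      · left; rw [one_smul]
      · right; rw [neg_one_smul, sub_eq_add_neg]
    · subst h2m
      simp only [if_pos rfl, if_neg h1m, mul_zero, zero_add] at h1
      have hδ' : δ = τ := by rcases hδ with rfl|rfl <;> rcases hτ with rfl|rfl <;> norm_num at h1 <;> norm_num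
      subst hδ'
      refine mem6 i h1m _ ?_
      rcases hε with rfl|rfl
      · left; rw [one_smul, add_comm]
      · right; rw [neg_one_smul, sub_eq_add_neg, add_comm]
    · simp only [if_neg h1m, if_neg h2m, mul_zero, add_zero] at h1
      norm_num at h1
  · intro hv
    have base : ∀ k : Fin 3, (τ • stdV m + stdV (m.succAbove k) ∈ cellV ∧
          ⟪τ • stdV m + stdV (m.succAbove k), τ • stdV m⟫ = 1) ∧
        (τ • stdV m - stdV (m.succAbove k) ∈ cellV ∧
          ⟪τ • stdV m - stdV (m.succAbove k), τ • stdV m⟫ = 1) := by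
      intro k
      have hne : m ≠ m.succAbove k := (Fin.succAbove_ne m k).symm
      have hne' : (m.succAbove k : Fin 4) ≠ m := Fin.succAbove_ne m k
      constructor
      · constructor
        · exact ⟨m, m.succAbove k, hne, τ, 1, hτ, Or.inl rfl, by rw [one_smul]⟩
        · have : τ • stdV m + stdV (m.succAbove k) = τ • stdV m + (1:ℝ) • stdV (m.succAbove k) := by
            rw [one_smul]
          rw [this, inner_vert, smul_stdV_apply, smul_stdV_apply, if_pos rfl, if_neg hne']
          rw [hττ]; ring
      · constructor
        · exact ⟨m, m.succAbove k, hne, τ, -1, hτ, Or.inr rfl, by rw [neg_one_smul, sub_eq_add_neg]⟩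
        · have : τ • stdV m - stdV (m.succAbove k) = τ • stdV m + (-1:ℝ) • stdV (m.succAbove k) := by
            rw [neg_one_smul, sub_eq_add_neg]
          rw [this, inner_vert, smul_stdV_apply, smul_stdV_apply, if_pos rfl, if_neg hne']
          rw [hττ]; ring
    rcases hv with rfl|rfl|rfl|rfl|rfl|rfl
    · exact (base 0).1
    · exact (base 0).2
    · exact (base 1).1
    · exact (base 1).2
    · exact (base 2).1
    · exact (base 2).2

/-! ### The red/blue case -/

noncomputable def halfU (σ : Fin 4 → ℝ) : Fin 3 → EuclideanSpace ℝ (Fin 4) :=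
  fun k => WithLp.toLp 2 (fun i => σ i * (if i = 0 ∨ i = k.succ then 1 else -1) / 2 : Fin 4 → ℝ)

lemma halfU_apply (σ : Fin 4 → ℝ) (k : Fin 3) (i : Fin 4) :
    halfU σ k i = σ i * (if i = 0 ∨ i = k.succ then 1 else -1) / 2 := rfl

lemma half_orthonormal (σ : Fin 4 → ℝ) (hσ : ∀ i, σ i = 1 ∨ σ i = -1) :
    Orthonormal ℝ (halfU σ) := by
  have h2 : ∀ i, σ i * σ i = 1 := fun i => by rcases hσ i with h|h <;> rw [h] <;> norm_num
  rw [orthonormal_iff_ite]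
  intro a b
  rw [PiLp.inner_apply]
  simp only [RCLike.inner_apply, starRingEnd_apply, star_trivial]
  rw [Fin.sum_univ_four]
  simp only [halfU_apply]
  fin_cases a <;> fin_cases b <;>
    · simp +decide
      nlinarith [h2 0, h2 1, h2 2, h2 3]

lemma half_hV (σ : Fin 4 → ℝ) (hσ : ∀ i, σ i = 1 ∨ σ i = -1)
    (w : EuclideanSpace ℝ (Fin 4)) (hw : ∀ i, w i = σ i / 2) :
    ∀ v ∈ cellV, ⟪v, w⟫ ≤ 1 := by
  rintro v ⟨i, j, hij, ε, δ, hε, hδ, rfl⟩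
  rw [inner_vert, hw, hw]
  rcases hε with rfl|rfl <;> rcases hδ with rfl|rfl <;>
    rcases hσ i with h1|h1 <;> rcases hσ j with h2|h2 <;> rw [h1, h2] <;> norm_num

lemma half_pairs (σ : Fin 4 → ℝ) (w : EuclideanSpace ℝ (Fin 4)) (hw : ∀ i, w i = σ i / 2) :
    (w + halfU σ 0 = σ 0 • stdV 0 + σ 1 • stdV 1) ∧
    (w - halfU σ 0 = σ 2 • stdV 2 + σ 3 • stdV 3) ∧
    (w + halfU σ 1 = σ 0 • stdV 0 + σ 2 • stdV 2) ∧
    (w - halfU σ 1 = σ 1 • stdV 1 + σ 3 • stdV 3) ∧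
    (w + halfU σ 2 = σ 0 • stdV 0 + σ 3 • stdV 3) ∧
    (w - halfU σ 2 = σ 1 • stdV 1 + σ 2 • stdV 2) := by
  refine ⟨?_, ?_, ?_, ?_, ?_, ?_⟩ <;>
    · ext l
      fin_cases l <;>
        · simp +decide [PiLp.add_apply, PiLp.sub_apply, hw, halfU_apply, smul_stdV_apply,
            stdV_apply]
          try ring

lemma half_face (σ : Fin 4 → ℝ) (hσ : ∀ i, σ i = 1 ∨ σ i = -1)
    (w : EuclideanSpace ℝ (Fin 4)) (hw : ∀ i, w i = σ i / 2) :
    {v ∈ cellV | ⟪v, w⟫ = 1} =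
      ({w + halfU σ 0, w - halfU σ 0, w + halfU σ 1, w - halfU σ 1,
        w + halfU σ 2, w - halfU σ 2} : Set (EuclideanSpace ℝ (Fin 4))) := by
  have h2 : ∀ i, σ i * σ i = 1 := fun i => by rcases hσ i with h|h <;> rw [h] <;> norm_num
  obtain ⟨p1, p2, p3, p4, p5, p6⟩ := half_pairs σ w hw
  rw [p1, p2, p3, p4, p5, p6]
  ext v
  constructor
  · rintro ⟨⟨i, j, hij, ε, δ, hε, hδ, rfl⟩, h1⟩
    rw [inner_vert, hw, hw] at h1
    have hand : ε = σ i ∧ δ = σ j := by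
      rcases hε with rfl|rfl <;> rcases hδ with rfl|rfl <;>
        rcases hσ i with h1'|h1' <;> rcases hσ j with h2'|h2' <;>
          rw [h1', h2'] at h1 ⊢ <;> norm_num at h1 <;> norm_num
    obtain ⟨rfl, rfl⟩ := hand
    simp only [Set.mem_insert_iff, Set.mem_singleton_iff]
    fin_cases i <;> fin_cases j <;>
      first
        | exact absurd rfl hij
        | exact Or.inl rfl
        | exact Or.inr (Or.inl rfl)
        | exact Or.inr (Or.inr (Or.inl rfl))
        | exact Or.inr (Or.inr (Or.inr (Or.inl rfl)))
        | exact Or.inr (Or.inr (Or.inr (Or.inr (Or.inl rfl))))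
        | exact Or.inr (Or.inr (Or.inr (Or.inr (Or.inr rfl))))
        | (rw [add_comm]
           first
            | exact Or.inl rfl
            | exact Or.inr (Or.inl rfl)
            | exact Or.inr (Or.inr (Or.inl rfl))
            | exact Or.inr (Or.inr (Or.inr (Or.inl rfl)))
            | exact Or.inr (Or.inr (Or.inr (Or.inr (Or.inl rfl))))
            | exact Or.inr (Or.inr (Or.inr (Or.inr (Or.inr rfl)))))
  · intro hv
    simp only [Set.mem_insert_iff, Set.mem_singleton_iff] at hv
    have vert : ∀ i j : Fin 4, i ≠ j →
        (σ i • stdV i + σ j • stdV j ∈ cellV ∧ ⟪σ i • stdV i + σ j • stdV j, w⟫ = 1) := by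
      intro i j hij
      refine ⟨⟨i, j, hij, σ i, σ j, hσ i, hσ j, rfl⟩, ?_⟩
      rw [inner_vert, hw, hw]
      nlinarith [h2 i, h2 j]
    rcases hv with rfl|rfl|rfl|rfl|rfl|rfl
    · exact vert 0 1 (by decide)
    · exact vert 2 3 (by decide)
    · exact vert 0 2 (by decide)
    · exact vert 1 3 (by decide)
    · exact vert 0 3 (by decide)
    · exact vert 1 2 (by decide)

lemma green_case (m : Fin 4) (τ : ℝ) (hτ : τ = 1 ∨ τ = -1) :
    ∃ ι : EuclideanSpace ℝ (Fin 3) →ᵃⁱ[ℝ] EuclideanSpace ℝ (Fin 4),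
      {x ∈ convexHull ℝ cellV | ⟪x, τ • stdV m⟫ = 1} =
        ι '' (convexHull ℝ {stdW 0, -stdW 0, stdW 1, -stdW 1, stdW 2, -stdW 2}) :=
  key (τ • stdV m) (fun k => stdV (m.succAbove k))
    (orthonormal_stdV.comp m.succAbove (Fin.succAbove_right_injective))
    (green_hV m τ hτ) (green_face m τ hτ)

lemma half_case (σ : Fin 4 → ℝ) (hσ : ∀ i, σ i = 1 ∨ σ i = -1)
    (w : EuclideanSpace ℝ (Fin 4)) (hw : ∀ i, w i = σ i / 2) :
    ∃ ι : EuclideanSpace ℝ (Fin 3) →ᵃⁱ[ℝ] EuclideanSpace ℝ (Fin 4),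
      {x ∈ convexHull ℝ cellV | ⟪x, w⟫ = 1} =
        ι '' (convexHull ℝ {stdW 0, -stdW 0, stdW 1, -stdW 1, stdW 2, -stdW 2}) :=
  key w (halfU σ) (half_orthonormal σ hσ) (half_hV σ hσ w hw) (half_face σ hσ w hw)

/-- Every facet of the 24-cell is a regular ideal octahedron: the facet dual to
`w ∈ G ∪ R ∪ B` is the image of the standard regular octahedron under an isometric
affine embedding of `EuclideanSpace ℝ (Fin 3)` into `EuclideanSpace ℝ (Fin 4)`. -/
theorem facet_is_regular_octahedron (w : EuclideanSpace ℝ (Fin 4))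
    (hw : w ∈ colG ∪ colR ∪ colB) :
    ∃ ι : EuclideanSpace ℝ (Fin 3) →ᵃⁱ[ℝ] EuclideanSpace ℝ (Fin 4),
      {x ∈ convexHull ℝ cellV | ⟪x, w⟫ = 1} =
        ι '' (convexHull ℝ {stdW 0, -stdW 0, stdW 1, -stdW 1, stdW 2, -stdW 2}) := by
  rcases hw with (hG | hR) | hB
  · obtain ⟨m, hm | hm⟩ := hG
    · have h := green_case m 1 (Or.inl rfl)
      rwa [one_smul, ← hm] at h
    · have h := green_case m (-1) (Or.inr rfl)
      rw [neg_one_smul, ← hm] at h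
      exact h
  · obtain ⟨σ, hσ, _, hw⟩ := hR
    exact half_case σ hσ w hw
  · obtain ⟨σ, hσ, _, hw⟩ := hB
    exact half_case σ hσ w hw
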